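/- If a finite directed graph G contains a spanning tree and x ∈ ℝⁿ is not a constant vector, then there exists an agent i attaining the maximum of x that has an in-neighbor j with xⱼ < xᵢ, or there exists an agent m attaining the minimum of x that has an in-neighbor j with xⱼ > x_m. -/
import Mathlib

/-- If the max set is closed under taking in-neighbors, reachability into a
maximizer makes the source a maximizer. -/
lemma stmt_17_aux {ι : Type*} (E : ι → ι → Prop) (x : ι → ℝ)
    (hcl : ∀ i, (∀ k, x k ≤ x i) → ∀ j, E j i → x j = x i)
    {r v : ι} (h : Relation.ReflTransGen E r v) (hv : ∀ k, x k ≤ x v) :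
    ∀ k, x k ≤ x r := by
  induction h with
  | refl => exact hv
  | tail _ e ih =>
    have hb := hcl _ hv _ e
    exact ih (fun k => (hv k).trans_eq hb.symm)

/-- If a finite digraph contains a spanning tree (some root reaches every vertex)
and `x` is not constant, then some agent attaining the maximum has an in-neighbor
with strictly smaller state, or some agent attaining the minimum has an
in-neighbor with strictly larger state. -/
theorem stmt_17 (ι : Type*) [Fintype ι] (E : ι → ι → Prop)
    (hspan : ∃ r : ι, ∀ v, Relation.ReflTransGen E r v)
    (x : ι → ℝ) (hnc : ∃ p q : ι, x p ≠ x q) :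
    (∃ i, (∀ k, x k ≤ x i) ∧ ∃ j, E j i ∧ x j < x i) ∨
    (∃ m, (∀ k, x m ≤ x k) ∧ ∃ j, E j m ∧ x m < x j) := by
  by_contra hcon
  push_neg at hcon
  obtain ⟨hmax, hmin⟩ := hcon
  obtain ⟨r, hr⟩ := hspan
  obtain ⟨p, q, hpq⟩ := hnc
  have : Nonempty ι := ⟨p⟩
  obtain ⟨i, hi⟩ := Finite.exists_max x
  obtain ⟨m, hm⟩ := Finite.exists_min x
  -- max set closed under in-neighbors
  have hclM : ∀ i, (∀ k, x k ≤ x i) → ∀ j, E j i → x j = x i := by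
    intro i hi j hj
    exact le_antisymm (hi j) (hmax i hi j hj)
  have hclm : ∀ i, (∀ k, x i ≤ x k) → ∀ j, E j i → x j = x i := by
    intro i hi j hj
    exact le_antisymm (hmin i hi j hj) (hi j)
  -- r is a maximizer
  have hrmax : ∀ k, x k ≤ x r := stmt_17_aux E x hclM (hr i) hi
  -- r is a minimizer (same lemma with x replaced by -x)
  have hrmin : ∀ k, x r ≤ x k := by
    have := stmt_17_aux E (fun t => -(x t))
      (fun i hi j hj => by
        have hi' : ∀ k, -x k ≤ -x i := hi
        have h' : ∀ k, x i ≤ x k := fun k => by linarith [hi' k]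
        have := hclm i h' j hj
        simp [this])
      (hr m) (fun k => by simpa using hm k)
    have this' : ∀ k, -x k ≤ -x r := this
    intro k; linarith [this' k]
  exact hpq (le_antisymm ((hrmax p).trans (hrmin q)) ((hrmax q).trans (hrmin p)))
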